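/- Assume 0.9·d_{i0} ≤ d_i ≤ 1.1·d_{i0} for every i, 0.9·d_0 ≤ d ≤ 1.1·d_0, ρ ≥ d² + 2‖e‖², 0 < ε ≤ 1/15, the Local RIP holds, and ‖𝒜*(e)‖ ≤ εd_0/(10√2·sκ). Then 𝒩_F̃ ∩ 𝒩_ε ⊆ 𝒩_d ∩ 𝒩_μ ∩ 𝒩_{(9/10)ε}; that is, every (h,x) with F̃(h,x) ≤ ε²d_0²/(3sκ²) + ‖e‖² and δ_i ≤ ε for all i in fact satisfies (h,x) ∈ 𝒩_d ∩ 𝒩_μ and δ_i ≤ (9/10)ε for all i. -/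

import Mathlib

noncomputable section
open Finset ComplexConjugate

namespace RGD

/-- Squared Euclidean norm of a complex vector. -/
def vnormSq {n : ℕ} (v : Fin n → ℂ) : ℝ := ∑ j, ‖v j‖ ^ 2

/-- Euclidean norm of a complex vector. -/
def vnorm {n : ℕ} (v : Fin n → ℂ) : ℝ := Real.sqrt (vnormSq v)

/-- Inner product, conjugate-linear in the first argument. -/
def vinner {n : ℕ} (u v : Fin n → ℂ) : ℂ := ∑ j, conj (u j) * v j

/-- Squared Frobenius norm of a matrix. -/
def frobSq {K N : ℕ} (Z : Matrix (Fin K) (Fin N) ℂ) : ℝ := ∑ k, ∑ j, ‖Z k j‖ ^ 2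

/-- Frobenius norm of a matrix. -/
def frob {K N : ℕ} (Z : Matrix (Fin K) (Fin N) ℂ) : ℝ := Real.sqrt (frobSq Z)

/-- Frobenius inner product `⟨U,V⟩ = Tr(U*V)`, conjugate-linear in the first argument. -/
def finner {K N : ℕ} (U V : Matrix (Fin K) (Fin N) ℂ) : ℂ := ∑ k, ∑ j, conj (U k j) * V k j

/-- Spectral (operator) norm of a matrix: sup of `‖Zv‖` over the closed unit ball. -/
def opNorm {K N : ℕ} (Z : Matrix (Fin K) (Fin N) ℂ) : ℝ :=
  sSup {r : ℝ | ∃ v : Fin N → ℂ, vnorm v ≤ 1 ∧ r = vnorm (Z.mulVec v)}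

/-- Squared Frobenius norm of a block-diagonal matrix, given by its diagonal blocks. -/
def famFrobSq {K N s : ℕ} (Z : Fin s → Matrix (Fin K) (Fin N) ℂ) : ℝ := ∑ i, frobSq (Z i)

/-- Frobenius norm of a block-diagonal matrix, given by its diagonal blocks. -/
def famFrob {K N s : ℕ} (Z : Fin s → Matrix (Fin K) (Fin N) ℂ) : ℝ := Real.sqrt (famFrobSq Z)

/-- The rank-one matrix `u v*`. -/
def rankOne {K N : ℕ} (u : Fin K → ℂ) (v : Fin N → ℂ) : Matrix (Fin K) (Fin N) ℂ :=
  Matrix.of fun k j => u k * conj (v j)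

/-- `ℋ(h,x)`: block-diagonal matrix with `i`-th block `hᵢ xᵢ*`. -/
def Hmap {K N s : ℕ} (h : Fin s → Fin K → ℂ) (x : Fin s → Fin N → ℂ) :
    Fin s → Matrix (Fin K) (Fin N) ℂ := fun i => rankOne (h i) (x i)

/-- `𝒜ᵢ(Z) = (bₗ* Z aₗ)ₗ`. -/
def calAi {K N L : ℕ} (b : Fin L → Fin K → ℂ) (a : Fin L → Fin N → ℂ)
    (Z : Matrix (Fin K) (Fin N) ℂ) : Fin L → ℂ :=
  fun l => vinner (b l) (Z.mulVec (a l))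

/-- `𝒜(Z) = Σᵢ 𝒜ᵢ(Zᵢ)` on block-diagonal matrices. -/
def calA {K N L s : ℕ} (b : Fin L → Fin K → ℂ) (a : Fin s → Fin L → Fin N → ℂ)
    (Z : Fin s → Matrix (Fin K) (Fin N) ℂ) : Fin L → ℂ :=
  fun l => ∑ i, calAi b (a i) (Z i) l

/-- `𝒜ᵢ*(z) = Σₗ zₗ bₗ aₗ*`. -/
def calAdj {K N L : ℕ} (b : Fin L → Fin K → ℂ) (a : Fin L → Fin N → ℂ)
    (z : Fin L → ℂ) : Matrix (Fin K) (Fin N) ℂ :=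
  Matrix.of fun k j => ∑ l, z l * b l k * conj (a l j)

/-- `‖𝒜*(e)‖ = maxᵢ ‖𝒜ᵢ*(e)‖` (operator norms). -/
def AadjNorm {K N L s : ℕ} (b : Fin L → Fin K → ℂ) (a : Fin s → Fin L → Fin N → ℂ)
    (e : Fin L → ℂ) : ℝ :=
  ⨆ i : Fin s, opNorm (calAdj b (a i) e)

/-- `B*B = I_K`, expressed in terms of the columns `bₗ` of `B*`. -/
def BtBeqI {K L : ℕ} (b : Fin L → Fin K → ℂ) : Prop :=
  ∀ k k' : Fin K, (∑ l, b l k * conj (b l k')) = if k = k' then (1 : ℂ) else 0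

/-- `μ ≥ μ_h`, i.e. `√L ‖B h_{i0}‖_∞ ≤ μ ‖h_{i0}‖` for all `i`. -/
def muhLe {K L s : ℕ} (b : Fin L → Fin K → ℂ) (h0 : Fin s → Fin K → ℂ) (μ : ℝ) : Prop :=
  ∀ i l, Real.sqrt L * ‖vinner (b l) (h0 i)‖ ≤ μ * vnorm (h0 i)

/-- `d₀ = √(Σᵢ d_{i0}²)`. -/
def dtot {s : ℕ} (d0 : Fin s → ℝ) : ℝ := Real.sqrt (∑ i, d0 i ^ 2)

/-- Condition number `κ = (maxᵢ d_{i0}) / (minᵢ d_{i0})`. -/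
def kappa {s : ℕ} (d0 : Fin s → ℝ) : ℝ := (⨆ i, d0 i) / (⨅ i, d0 i)

/-- The observation `y = 𝒜(ℋ(h₀,x₀)) + e`. -/
def yvec {K N L s : ℕ} (b : Fin L → Fin K → ℂ) (a : Fin s → Fin L → Fin N → ℂ)
    (h0 : Fin s → Fin K → ℂ) (x0 : Fin s → Fin N → ℂ) (e : Fin L → ℂ) : Fin L → ℂ :=
  fun l => calA b a (Hmap h0 x0) l + e l

/-- `F(h,x) = ‖𝒜(ℋ(h,x)) − y‖²`. -/
def Fobj {K N L s : ℕ} (b : Fin L → Fin K → ℂ) (a : Fin s → Fin L → Fin N → ℂ)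
    (h0 : Fin s → Fin K → ℂ) (x0 : Fin s → Fin N → ℂ) (e : Fin L → ℂ)
    (h : Fin s → Fin K → ℂ) (x : Fin s → Fin N → ℂ) : ℝ :=
  vnormSq (fun l => calA b a (Hmap h x) l - yvec b a h0 x0 e l)

def G0 (z : ℝ) : ℝ := max (z - 1) 0 ^ 2

def G0' (z : ℝ) : ℝ := 2 * max (z - 1) 0

/-- The `i`-th regularizer `Gᵢ(hᵢ,xᵢ)` (including the factor `ρ`). -/
def Gi {K N L : ℕ} (b : Fin L → Fin K → ℂ) (ρ μ di : ℝ)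
    (hi : Fin K → ℂ) (xi : Fin N → ℂ) : ℝ :=
  ρ * (G0 (vnormSq hi / (2 * di)) + G0 (vnormSq xi / (2 * di))
    + ∑ l, G0 ((L : ℝ) * ‖vinner (b l) hi‖ ^ 2 / (8 * di * μ ^ 2)))

/-- The regularizer `G(h,x) = Σᵢ Gᵢ(hᵢ,xᵢ)`. -/
def Greg {K N L s : ℕ} (b : Fin L → Fin K → ℂ) (ρ μ : ℝ) (dd : Fin s → ℝ)
    (h : Fin s → Fin K → ℂ) (x : Fin s → Fin N → ℂ) : ℝ :=
  ∑ i, Gi b ρ μ (dd i) (h i) (x i)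

/-- `F̃ = F + G`. -/
def Ftil {K N L s : ℕ} (b : Fin L → Fin K → ℂ) (a : Fin s → Fin L → Fin N → ℂ)
    (h0 : Fin s → Fin K → ℂ) (x0 : Fin s → Fin N → ℂ) (e : Fin L → ℂ)
    (ρ μ : ℝ) (dd : Fin s → ℝ)
    (h : Fin s → Fin K → ℂ) (x : Fin s → Fin N → ℂ) : ℝ :=
  Fobj b a h0 x0 e h x + Greg b ρ μ dd h x

/-- The residual `𝒜(ℋ(h,x)) − y`. -/
def residual {K N L s : ℕ} (b : Fin L → Fin K → ℂ) (a : Fin s → Fin L → Fin N → ℂ)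
    (h0 : Fin s → Fin K → ℂ) (x0 : Fin s → Fin N → ℂ) (e : Fin L → ℂ)
    (h : Fin s → Fin K → ℂ) (x : Fin s → Fin N → ℂ) : Fin L → ℂ :=
  fun l => calA b a (Hmap h x) l - yvec b a h0 x0 e l

/-- Wirtinger gradient `∇F_{hᵢ} = 𝒜ᵢ*(𝒜(ℋ(h,x)) − y) xᵢ`. -/
def gradFh {K N L s : ℕ} (b : Fin L → Fin K → ℂ) (a : Fin s → Fin L → Fin N → ℂ)
    (h0 : Fin s → Fin K → ℂ) (x0 : Fin s → Fin N → ℂ) (e : Fin L → ℂ)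
    (h : Fin s → Fin K → ℂ) (x : Fin s → Fin N → ℂ) (i : Fin s) : Fin K → ℂ :=
  (calAdj b (a i) (residual b a h0 x0 e h x)).mulVec (x i)

/-- Wirtinger gradient `∇F_{xᵢ} = (𝒜ᵢ*(𝒜(ℋ(h,x)) − y))* hᵢ`. -/
def gradFx {K N L s : ℕ} (b : Fin L → Fin K → ℂ) (a : Fin s → Fin L → Fin N → ℂ)
    (h0 : Fin s → Fin K → ℂ) (x0 : Fin s → Fin N → ℂ) (e : Fin L → ℂ)
    (h : Fin s → Fin K → ℂ) (x : Fin s → Fin N → ℂ) (i : Fin s) : Fin N → ℂ :=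
  (calAdj b (a i) (residual b a h0 x0 e h x)).conjTranspose.mulVec (h i)

/-- Wirtinger gradient `∇G_{hᵢ}`. -/
def gradGh {K L s : ℕ} (b : Fin L → Fin K → ℂ) (ρ μ : ℝ) (dd : Fin s → ℝ)
    (h : Fin s → Fin K → ℂ) (i : Fin s) : Fin K → ℂ :=
  fun k => ((ρ / (2 * dd i) : ℝ) : ℂ) *
    (((G0' (vnormSq (h i) / (2 * dd i)) : ℝ) : ℂ) * h i k
      + (((L : ℝ) / (4 * μ ^ 2) : ℝ) : ℂ) *
        ∑ l, ((G0' ((L : ℝ) * ‖vinner (b l) (h i)‖ ^ 2 / (8 * dd i * μ ^ 2)) : ℝ) : ℂ)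
          * (vinner (b l) (h i) * b l k))

/-- Wirtinger gradient `∇G_{xᵢ}`. -/
def gradGx {N s : ℕ} (ρ : ℝ) (dd : Fin s → ℝ)
    (x : Fin s → Fin N → ℂ) (i : Fin s) : Fin N → ℂ :=
  fun j => ((ρ / (2 * dd i) : ℝ) : ℂ) * (((G0' (vnormSq (x i) / (2 * dd i)) : ℝ) : ℂ) * x i j)

/-- `∇F̃_{hᵢ} = ∇F_{hᵢ} + ∇G_{hᵢ}`. -/
def gradH {K N L s : ℕ} (b : Fin L → Fin K → ℂ) (a : Fin s → Fin L → Fin N → ℂ)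
    (h0 : Fin s → Fin K → ℂ) (x0 : Fin s → Fin N → ℂ) (e : Fin L → ℂ)
    (ρ μ : ℝ) (dd : Fin s → ℝ)
    (h : Fin s → Fin K → ℂ) (x : Fin s → Fin N → ℂ) (i : Fin s) : Fin K → ℂ :=
  fun k => gradFh b a h0 x0 e h x i k + gradGh b ρ μ dd h i k

/-- `∇F̃_{xᵢ} = ∇F_{xᵢ} + ∇G_{xᵢ}`. -/
def gradX {K N L s : ℕ} (b : Fin L → Fin K → ℂ) (a : Fin s → Fin L → Fin N → ℂ)
    (h0 : Fin s → Fin K → ℂ) (x0 : Fin s → Fin N → ℂ) (e : Fin L → ℂ)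
    (ρ μ : ℝ) (dd : Fin s → ℝ)
    (h : Fin s → Fin K → ℂ) (x : Fin s → Fin N → ℂ) (i : Fin s) : Fin N → ℂ :=
  fun j => gradFx b a h0 x0 e h x i j + gradGx ρ dd x i j

/-- `‖∇F̃(h,x)‖²` (squared norm of the stacked Wirtinger gradient). -/
def gradNormSq {K N L s : ℕ} (b : Fin L → Fin K → ℂ) (a : Fin s → Fin L → Fin N → ℂ)
    (h0 : Fin s → Fin K → ℂ) (x0 : Fin s → Fin N → ℂ) (e : Fin L → ℂ)
    (ρ μ : ℝ) (dd : Fin s → ℝ)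
    (h : Fin s → Fin K → ℂ) (x : Fin s → Fin N → ℂ) : ℝ :=
  ∑ i, vnormSq (gradH b a h0 x0 e ρ μ dd h x i) + ∑ i, vnormSq (gradX b a h0 x0 e ρ μ dd h x i)

/-- `‖∇F̃(h',x') − ∇F̃(h,x)‖²`. -/
def gradDiffNormSq {K N L s : ℕ} (b : Fin L → Fin K → ℂ) (a : Fin s → Fin L → Fin N → ℂ)
    (h0 : Fin s → Fin K → ℂ) (x0 : Fin s → Fin N → ℂ) (e : Fin L → ℂ)
    (ρ μ : ℝ) (dd : Fin s → ℝ)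
    (h : Fin s → Fin K → ℂ) (x : Fin s → Fin N → ℂ)
    (h' : Fin s → Fin K → ℂ) (x' : Fin s → Fin N → ℂ) : ℝ :=
  ∑ i, vnormSq (fun k => gradH b a h0 x0 e ρ μ dd h' x' i k - gradH b a h0 x0 e ρ μ dd h x i k)
  + ∑ i, vnormSq (fun j => gradX b a h0 x0 e ρ μ dd h' x' i j - gradX b a h0 x0 e ρ μ dd h x i j)

/-- Membership in `𝒩_d`. -/
def inNd {K N s : ℕ} (d0 : Fin s → ℝ)
    (h : Fin s → Fin K → ℂ) (x : Fin s → Fin N → ℂ) : Prop :=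
  ∀ i, vnorm (h i) ≤ 2 * Real.sqrt (d0 i) ∧ vnorm (x i) ≤ 2 * Real.sqrt (d0 i)

/-- Membership in `𝒩_μ`. -/
def inNmu {K L s : ℕ} (b : Fin L → Fin K → ℂ) (d0 : Fin s → ℝ) (μ : ℝ)
    (h : Fin s → Fin K → ℂ) : Prop :=
  ∀ i, ∀ l, Real.sqrt L * ‖vinner (b l) (h i)‖ ≤ 4 * Real.sqrt (d0 i) * μ

/-- `δᵢ(hᵢ,xᵢ) = ‖hᵢxᵢ* − h_{i0}x_{i0}*‖_F / d_{i0}`. -/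
def deltaI {K N : ℕ} (h0i : Fin K → ℂ) (x0i : Fin N → ℂ) (d0i : ℝ)
    (hi : Fin K → ℂ) (xi : Fin N → ℂ) : ℝ :=
  frob (rankOne hi xi - rankOne h0i x0i) / d0i

/-- Membership in `𝒩_ε`. -/
def inNeps {K N s : ℕ} (h0 : Fin s → Fin K → ℂ) (x0 : Fin s → Fin N → ℂ)
    (d0 : Fin s → ℝ) (ε : ℝ)
    (h : Fin s → Fin K → ℂ) (x : Fin s → Fin N → ℂ) : Prop :=
  ∀ i, deltaI (h0 i) (x0 i) (d0 i) (h i) (x i) ≤ ε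

/-- The global relative error `δ(h,x) = ‖ℋ(h,x) − X₀‖_F / d₀`. -/
def deltaTot {K N s : ℕ} (h0 : Fin s → Fin K → ℂ) (x0 : Fin s → Fin N → ℂ)
    (d0 : Fin s → ℝ)
    (h : Fin s → Fin K → ℂ) (x : Fin s → Fin N → ℂ) : ℝ :=
  famFrob (fun i => Hmap h x i - Hmap h0 x0 i) / dtot d0

/-- Membership in `𝒩_F̃`. -/
def inNF {K N L s : ℕ} (b : Fin L → Fin K → ℂ) (a : Fin s → Fin L → Fin N → ℂ)
    (h0 : Fin s → Fin K → ℂ) (x0 : Fin s → Fin N → ℂ) (e : Fin L → ℂ)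
    (d0 : Fin s → ℝ) (ρ μ : ℝ) (dd : Fin s → ℝ) (ε : ℝ)
    (h : Fin s → Fin K → ℂ) (x : Fin s → Fin N → ℂ) : Prop :=
  Ftil b a h0 x0 e ρ μ dd h x ≤ ε ^ 2 * dtot d0 ^ 2 / (3 * (s : ℝ) * kappa d0 ^ 2) + vnormSq e

/-- The Local Restricted Isometry Property on `𝒩_d ∩ 𝒩_μ ∩ 𝒩_ε`. -/
def LocalRIP {K N L s : ℕ} (b : Fin L → Fin K → ℂ) (a : Fin s → Fin L → Fin N → ℂ)
    (h0 : Fin s → Fin K → ℂ) (x0 : Fin s → Fin N → ℂ)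
    (d0 : Fin s → ℝ) (μ ε : ℝ) : Prop :=
  ∀ (h : Fin s → Fin K → ℂ) (x : Fin s → Fin N → ℂ),
    inNd d0 h x → inNmu b d0 μ h → inNeps h0 x0 d0 ε h x →
      (2 / 3) * famFrobSq (fun i => Hmap h x i - Hmap h0 x0 i)
          ≤ vnormSq (calA b a fun i => Hmap h x i - Hmap h0 x0 i)
      ∧ vnormSq (calA b a fun i => Hmap h x i - Hmap h0 x0 i)
          ≤ (3 / 2) * famFrobSq (fun i => Hmap h x i - Hmap h0 x0 i)

/-- `α_{i1} = ⟨h_{i0}, hᵢ⟩ / d_{i0}`. -/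
def alpha1 {K s : ℕ} (h0 : Fin s → Fin K → ℂ) (d0 : Fin s → ℝ)
    (h : Fin s → Fin K → ℂ) (i : Fin s) : ℂ :=
  vinner (h0 i) (h i) / ((d0 i : ℝ) : ℂ)

/-- `α_{i2} = ⟨x_{i0}, xᵢ⟩ / d_{i0}`. -/
def alpha2 {N s : ℕ} (x0 : Fin s → Fin N → ℂ) (d0 : Fin s → ℝ)
    (x : Fin s → Fin N → ℂ) (i : Fin s) : ℂ :=
  vinner (x0 i) (x i) / ((d0 i : ℝ) : ℂ)

/-- `δ₀ = δ/10`. -/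
def delta0 {K N s : ℕ} (h0 : Fin s → Fin K → ℂ) (x0 : Fin s → Fin N → ℂ)
    (d0 : Fin s → ℝ) (h : Fin s → Fin K → ℂ) (x : Fin s → Fin N → ℂ) : ℝ :=
  deltaTot h0 x0 d0 h x / 10

/-- `αᵢ = (1−δ₀)α_{i1}` if `‖hᵢ‖ ≥ ‖xᵢ‖`, else `1/((1−δ₀) conj(α_{i2}))`. -/
def alphaC {K N s : ℕ} (h0 : Fin s → Fin K → ℂ) (x0 : Fin s → Fin N → ℂ)
    (d0 : Fin s → ℝ) (h : Fin s → Fin K → ℂ) (x : Fin s → Fin N → ℂ) (i : Fin s) : ℂ :=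
  if vnorm (x i) ≤ vnorm (h i)
  then ((1 - delta0 h0 x0 d0 h x : ℝ) : ℂ) * alpha1 h0 d0 h i
  else 1 / (((1 - delta0 h0 x0 d0 h x : ℝ) : ℂ) * conj (alpha2 x0 d0 x i))

/-- `Δhᵢ = hᵢ − αᵢ h_{i0}`. -/
def dh {K N s : ℕ} (h0 : Fin s → Fin K → ℂ) (x0 : Fin s → Fin N → ℂ)
    (d0 : Fin s → ℝ) (h : Fin s → Fin K → ℂ) (x : Fin s → Fin N → ℂ) (i : Fin s) :
    Fin K → ℂ :=
  fun k => h i k - alphaC h0 x0 d0 h x i * h0 i k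

/-- `Δxᵢ = xᵢ − conj(αᵢ)⁻¹ x_{i0}`. -/
def dx {K N s : ℕ} (h0 : Fin s → Fin K → ℂ) (x0 : Fin s → Fin N → ℂ)
    (d0 : Fin s → ℝ) (h : Fin s → Fin K → ℂ) (x : Fin s → Fin N → ℂ) (i : Fin s) :
    Fin N → ℂ :=
  fun j => x i j - (conj (alphaC h0 x0 d0 h x i))⁻¹ * x0 i j

/-- `σ²_max(h,x) = maxₗ Σᵢ |bₗ*hᵢ|² ‖xᵢ‖²`. -/
def sigmaMaxSq {K N L s : ℕ} (b : Fin L → Fin K → ℂ)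
    (h : Fin s → Fin K → ℂ) (x : Fin s → Fin N → ℂ) : ℝ :=
  ⨆ l : Fin L, ∑ i, ‖vinner (b l) (h i)‖ ^ 2 * vnormSq (x i)

/-- The rank-one bound (Lemma: `𝒜` on block-diagonal matrices with rank-1 blocks). -/
def RankOneBound {K N L s : ℕ} (b : Fin L → Fin K → ℂ)
    (a : Fin s → Fin L → Fin N → ℂ) : Prop :=
  ∀ (h : Fin s → Fin K → ℂ) (x : Fin s → Fin N → ℂ),
    vnormSq (calA b a (Hmap h x)) ≤
      4 / 3 * famFrobSq (Hmap h x)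
      + 2 * Real.sqrt (2 * (s : ℝ) * famFrobSq (Hmap h x) * sigmaMaxSq b h x
          * ((K : ℝ) + N) * Real.log L)
      + 8 * (s : ℝ) * sigmaMaxSq b h x * ((K : ℝ) + N) * Real.log L

/-- The subspace `Tᵢ = {h_{i0} v* + u x_{i0}*}`. -/
def Tspace {K N : ℕ} (h0i : Fin K → ℂ) (x0i : Fin N → ℂ) :
    Set (Matrix (Fin K) (Fin N) ℂ) :=
  {Z | ∃ (u : Fin K → ℂ) (v : Fin N → ℂ), Z = rankOne h0i v + rankOne u x0i}

/-- `P` is the orthogonal projection onto `Tᵢ` w.r.t. the Frobenius inner product. -/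
def IsFrobProj {K N : ℕ} (h0i : Fin K → ℂ) (x0i : Fin N → ℂ)
    (P : Matrix (Fin K) (Fin N) ℂ → Matrix (Fin K) (Fin N) ℂ) : Prop :=
  ∀ Z, P Z ∈ Tspace h0i x0i ∧ ∀ W ∈ Tspace h0i x0i, finner W (Z - P Z) = 0

/-- Operator norm of `𝒜ᵢ` from `(ℂ^{K×N}, ‖·‖_F)` to `(ℂ^L, ‖·‖)`. -/
def calAiOpNorm {K N L : ℕ} (b : Fin L → Fin K → ℂ) (a : Fin L → Fin N → ℂ) : ℝ :=
  sSup {r : ℝ | ∃ Z : Matrix (Fin K) (Fin N) ℂ, frob Z ≤ 1 ∧ r = vnorm (calAi b a Z)}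

/-- Operator norm of `𝒜` from block-diagonal matrices with `‖·‖_F` to `ℂ^L`. -/
def calAOpNorm {K N L s : ℕ} (b : Fin L → Fin K → ℂ)
    (a : Fin s → Fin L → Fin N → ℂ) : ℝ :=
  sSup {r : ℝ | ∃ Z : Fin s → Matrix (Fin K) (Fin N) ℂ, famFrob Z ≤ 1 ∧ r = vnorm (calA b a Z)}

/-- Norm of a stacked vector in `ℂ^{ns}`. -/
def stackNorm {n s : ℕ} (u : Fin s → Fin n → ℂ) : ℝ := Real.sqrt (∑ i, vnormSq (u i))

/-- Norm of a point `z = (h,x) ∈ ℂ^{s(K+N)}`. -/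
def pairNorm {K N s : ℕ} (u : Fin s → Fin K → ℂ) (v : Fin s → Fin N → ℂ) : ℝ :=
  Real.sqrt (∑ i, vnormSq (u i) + ∑ i, vnormSq (v i))

/-- `z + t • w` componentwise, `t` real. -/
def shiftV {n s : ℕ} (u w : Fin s → Fin n → ℂ) (t : ℝ) : Fin s → Fin n → ℂ :=
  fun i k => u i k + (t : ℂ) * w i k

/-- `σ_max(h) = maxₗ √(Σᵢ |bₗ*hᵢ|²)` (unit `xᵢ`'s). -/
def sigmaMaxU {K L s : ℕ} (b : Fin L → Fin K → ℂ) (h : Fin s → Fin K → ℂ) : ℝ :=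
  ⨆ l, Real.sqrt (∑ i, ‖vinner (b l) (h i)‖ ^ 2)

-- bridge
def toE {n : ℕ} (v : Fin n → ℂ) : EuclideanSpace ℂ (Fin n) := (WithLp.equiv 2 _).symm v

lemma toE_apply {n : ℕ} (v : Fin n → ℂ) (j : Fin n) : toE v j = v j := rfl

lemma vnorm_eq {n : ℕ} (v : Fin n → ℂ) : vnorm v = ‖toE v‖ := by
  rw [EuclideanSpace.norm_eq]; rfl

lemma vinner_eq {n : ℕ} (u v : Fin n → ℂ) : vinner u v = inner ℂ (toE u) (toE v) := by
  simp [vinner, PiLp.inner_apply, RCLike.inner_apply, toE_apply, mul_comm]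

lemma vnormSq_nonneg {n : ℕ} (v : Fin n → ℂ) : 0 ≤ vnormSq v :=
  Finset.sum_nonneg fun _ _ => sq_nonneg _

lemma vnorm_nonneg {n : ℕ} (v : Fin n → ℂ) : 0 ≤ vnorm v := Real.sqrt_nonneg _

lemma vnorm_sq_eq {n : ℕ} (v : Fin n → ℂ) : vnorm v ^ 2 = vnormSq v :=
  Real.sq_sqrt (vnormSq_nonneg v)

lemma vnormSq_eq {n : ℕ} (v : Fin n → ℂ) : vnormSq v = ‖toE v‖ ^ 2 := by
  rw [← vnorm_sq_eq, vnorm_eq]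

lemma abs_vinner_le {n : ℕ} (u v : Fin n → ℂ) : ‖vinner u v‖ ≤ vnorm u * vnorm v := by
  rw [vinner_eq, vnorm_eq, vnorm_eq]; exact norm_inner_le_norm _ _

lemma frobSq_nonneg {K N : ℕ} (Z : Matrix (Fin K) (Fin N) ℂ) : 0 ≤ frobSq Z :=
  Finset.sum_nonneg fun _ _ => Finset.sum_nonneg fun _ _ => sq_nonneg _

lemma frob_nonneg {K N : ℕ} (Z : Matrix (Fin K) (Fin N) ℂ) : 0 ≤ frob Z := Real.sqrt_nonneg _

lemma frob_sq_eq {K N : ℕ} (Z : Matrix (Fin K) (Fin N) ℂ) : frob Z ^ 2 = frobSq Z :=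
  Real.sq_sqrt (frobSq_nonneg Z)

lemma mulVec_norm_le_frob {K N : ℕ} (M : Matrix (Fin K) (Fin N) ℂ) (v : Fin N → ℂ) :
    vnorm (M.mulVec v) ≤ frob M * vnorm v := by
  have h1 : vnormSq (M.mulVec v) ≤ frobSq M * vnormSq v := by
    rw [vnormSq, frobSq, Finset.sum_mul]
    refine Finset.sum_le_sum fun k _ => ?_
    have he : M.mulVec v k = vinner (fun j => conj (M k j)) v := by
      simp [Matrix.mulVec, dotProduct, vinner]
    rw [he]
    have := abs_vinner_le (fun j => conj (M k j)) v
    have h2 : ‖vinner (fun j => conj (M k j)) v‖ ^ 2 ≤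
        (vnorm (fun j => conj (M k j)) * vnorm v) ^ 2 := by
      apply pow_le_pow_left₀ (norm_nonneg _) this
    calc ‖vinner (fun j => conj (M k j)) v‖ ^ 2
        ≤ (vnorm (fun j => conj (M k j)) * vnorm v) ^ 2 := h2
      _ = vnormSq (fun j => conj (M k j)) * vnormSq v := by
          rw [mul_pow, vnorm_sq_eq, vnorm_sq_eq]
      _ = (∑ j, ‖M k j‖ ^ 2) * vnormSq v := by
          congr 1; simp [vnormSq]
  calc vnorm (M.mulVec v) = Real.sqrt (vnormSq (M.mulVec v)) := rfl
    _ ≤ Real.sqrt (frobSq M * vnormSq v) := Real.sqrt_le_sqrt h1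
    _ = frob M * vnorm v := by
        rw [Real.sqrt_mul (frobSq_nonneg M)]; rfl

lemma opNorm_bddAbove {K N : ℕ} (M : Matrix (Fin K) (Fin N) ℂ) :
    BddAbove {r : ℝ | ∃ v : Fin N → ℂ, vnorm v ≤ 1 ∧ r = vnorm (M.mulVec v)} := by
  refine ⟨frob M, fun r hr => ?_⟩
  obtain ⟨v, hv, rfl⟩ := hr
  calc vnorm (M.mulVec v) ≤ frob M * vnorm v := mulVec_norm_le_frob M v
    _ ≤ frob M * 1 := by
        exact mul_le_mul_of_nonneg_left hv (frob_nonneg M)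
    _ = frob M := mul_one _

lemma vnorm_zero {n : ℕ} : vnorm (0 : Fin n → ℂ) = 0 := by
  simp [vnorm, vnormSq]

lemma opNorm_nonneg {K N : ℕ} (M : Matrix (Fin K) (Fin N) ℂ) : 0 ≤ opNorm M := by
  have : (0 : ℝ) ∈ {r : ℝ | ∃ v : Fin N → ℂ, vnorm v ≤ 1 ∧ r = vnorm (M.mulVec v)} := by
    exact ⟨0, by rw [vnorm_zero]; norm_num, by rw [Matrix.mulVec_zero, vnorm_zero]⟩
  exact le_csSup (opNorm_bddAbove M) this

lemma vnorm_smul {n : ℕ} (c : ℂ) (v : Fin n → ℂ) : vnorm (fun j => c * v j) = ‖c‖ * vnorm v := by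
  have : toE (fun j => c * v j) = c • toE v := rfl
  rw [vnorm_eq, this, norm_smul, vnorm_eq]

lemma vnorm_eq_zero {n : ℕ} {v : Fin n → ℂ} (h : vnorm v = 0) : v = 0 := by
  rw [vnorm_eq, norm_eq_zero] at h
  funext j
  exact congrFun (congrArg (fun w => (WithLp.equiv 2 (Fin n → ℂ)) w) h) j

lemma mulVec_le_opNorm {K N : ℕ} (M : Matrix (Fin K) (Fin N) ℂ) (v : Fin N → ℂ) :
    vnorm (M.mulVec v) ≤ opNorm M * vnorm v := by
  rcases eq_or_lt_of_le (vnorm_nonneg v) with h0 | h0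
  · have hv0 : v = 0 := vnorm_eq_zero h0.symm
    rw [hv0, Matrix.mulVec_zero, vnorm_zero, vnorm_zero, mul_zero]
  · set c := vnorm v with hc
    have hmem : vnorm (M.mulVec fun j => (c⁻¹ : ℂ) * v j) ∈
        {r : ℝ | ∃ w : Fin N → ℂ, vnorm w ≤ 1 ∧ r = vnorm (M.mulVec w)} := by
      refine ⟨_, ?_, rfl⟩
      rw [vnorm_smul]
      simp only [Complex.norm_real, norm_inv, Complex.norm_real]
      rw [Real.norm_of_nonneg (vnorm_nonneg v)]
      rw [inv_mul_cancel₀ (ne_of_gt h0)]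
    have hle := le_csSup (opNorm_bddAbove M) hmem
    have heq : M.mulVec (fun j => (c⁻¹ : ℂ) * v j) = fun k => (c⁻¹ : ℂ) * M.mulVec v k := by
      funext k
      simp only [Matrix.mulVec, dotProduct, Finset.mul_sum]
      exact Finset.sum_congr rfl fun j _ => by ring
    rw [heq, vnorm_smul] at hle
    have hnc : ‖((c : ℂ))⁻¹‖ = c⁻¹ := by
      rw [norm_inv, Complex.norm_real, Real.norm_of_nonneg (le_of_lt h0)]
    rw [hnc] at hle
    calc vnorm (M.mulVec v) = c * (c⁻¹ * vnorm (M.mulVec v)) := by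
          field_simp
      _ ≤ c * opNorm M := mul_le_mul_of_nonneg_left hle (le_of_lt h0)
      _ = opNorm M * c := mul_comm _ _


lemma vinner_self {n : ℕ} (v : Fin n → ℂ) : vinner v v = (vnormSq v : ℂ) := by
  rw [vinner_eq, inner_self_eq_norm_sq_to_K, vnormSq_eq]
  norm_cast

lemma finner_rankOne {K N : ℕ} (M : Matrix (Fin K) (Fin N) ℂ) (u : Fin K → ℂ) (v : Fin N → ℂ) :
    finner M (rankOne u v) = conj (vinner u (M.mulVec v)) := by
  simp only [finner, rankOne, Matrix.of_apply, vinner, Matrix.mulVec, dotProduct,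
    map_sum, map_mul, Complex.conj_conj, Finset.mul_sum]
  exact Finset.sum_congr rfl fun k _ => Finset.sum_congr rfl fun j _ => by ring

lemma finner_add_right {K N : ℕ} (M Y Z : Matrix (Fin K) (Fin N) ℂ) :
    finner M (Y + Z) = finner M Y + finner M Z := by
  simp only [finner, Matrix.add_apply, mul_add, Finset.sum_add_distrib]

lemma frobSq_add_orth {K N : ℕ} (p q : Fin K → ℂ) (xv w : Fin N → ℂ)
    (horth : vinner xv w = 0) :
    frobSq (rankOne p xv + rankOne q w) = vnormSq p * vnormSq xv + vnormSq q * vnormSq w := by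
  have expand : ∀ (k : Fin K) (j : Fin N), ‖(rankOne p xv + rankOne q w) k j‖ ^ 2
      = ‖p k‖^2*‖xv j‖^2 + ‖q k‖^2*‖w j‖^2
        + 2*((p k * conj (q k)) * (conj (xv j) * w j)).re := by
    intro k j
    have h0 : (rankOne p xv + rankOne q w) k j = p k * conj (xv j) + q k * conj (w j) := rfl
    rw [h0, norm_add_sq (𝕜 := ℂ)]
    have h1 : ‖p k * conj (xv j)‖ = ‖p k‖ * ‖xv j‖ := by rw [norm_mul, RCLike.norm_conj]
    have h2 : ‖q k * conj (w j)‖ = ‖q k‖ * ‖w j‖ := by rw [norm_mul, RCLike.norm_conj]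
    have h3 : RCLike.re (inner (𝕜 := ℂ) (p k * conj (xv j)) (q k * conj (w j)))
        = ((p k * conj (q k)) * (conj (xv j) * w j)).re := by
      rw [RCLike.inner_apply, RCLike.re_to_complex,
        ← Complex.conj_re ((p k * conj (q k)) * (conj (xv j) * w j))]
      congr 1
      simp only [map_mul, Complex.conj_conj]
      ring
    rw [h1, h2, h3, mul_pow, mul_pow]
    ring
  unfold frobSq
  have : ∀ k : Fin K, ∑ j, ‖(rankOne p xv + rankOne q w) k j‖ ^ 2
      = ∑ j, (‖p k‖^2*‖xv j‖^2 + ‖q k‖^2*‖w j‖^2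
        + 2*((p k * conj (q k)) * (conj (xv j) * w j)).re) :=
    fun k => Finset.sum_congr rfl fun j _ => expand k j
  rw [Finset.sum_congr rfl fun k _ => this k]
  have hsplit : ∑ k, ∑ j, (‖p k‖^2*‖xv j‖^2 + ‖q k‖^2*‖w j‖^2
        + 2*((p k * conj (q k)) * (conj (xv j) * w j)).re)
      = (∑ k, ∑ j, ‖p k‖^2*‖xv j‖^2) + (∑ k, ∑ j, ‖q k‖^2*‖w j‖^2)
        + 2 * (∑ k, ∑ j, ((p k * conj (q k)) * (conj (xv j) * w j))).re := by
    rw [Complex.re_sum]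
    simp only [Finset.sum_add_distrib, Finset.mul_sum]
    congr 1
    refine Finset.sum_congr rfl fun k _ => ?_
    rw [Complex.re_sum, Finset.mul_sum]
  rw [hsplit]
  have hcross : (∑ k, ∑ j, ((p k * conj (q k)) * (conj (xv j) * w j))) = 0 := by
    have : ∀ k : Fin K, ∑ j, ((p k * conj (q k)) * (conj (xv j) * w j))
        = (p k * conj (q k)) * vinner xv w := fun k => by
      rw [vinner, Finset.mul_sum]
    rw [Finset.sum_congr rfl fun k _ => this k]
    simp [horth]
  rw [hcross]
  simp only [Complex.zero_re, mul_zero, add_zero]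
  rw [← Finset.sum_mul_sum, ← Finset.sum_mul_sum]
  rfl

lemma frob_rankOne_factor {K N : ℕ} (u : Fin K → ℂ) (v : Fin N → ℂ) :
    frobSq (rankOne u v) = vnormSq u * vnormSq v := by
  unfold frobSq rankOne vnormSq
  rw [Finset.sum_mul_sum]
  refine Finset.sum_congr rfl fun k _ => Finset.sum_congr rfl fun j _ => ?_
  rw [Matrix.of_apply, norm_mul, RCLike.norm_conj, mul_pow]

lemma finner_diff_bound {K N : ℕ} (M : Matrix (Fin K) (Fin N) ℂ)
    (hi h0i : Fin K → ℂ) (xi x0i : Fin N → ℂ) :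
    ‖finner M (rankOne hi xi - rankOne h0i x0i)‖ ≤
      Real.sqrt 2 * opNorm M * frob (rankOne hi xi - rankOne h0i x0i) := by
  set γ : ℂ := vinner xi x0i / (vnormSq xi : ℂ) with hγ
  set w : Fin N → ℂ := fun j => x0i j - γ * xi j with hw
  set p : Fin K → ℂ := fun k => hi k - conj γ * h0i k with hp
  set q : Fin K → ℂ := fun k => -h0i k with hq
  have horth : vinner xi w = 0 := by
    by_cases hz : vnormSq xi = 0
    · have hxi : xi = 0 := vnorm_eq_zero (by rw [vnorm, hz, Real.sqrt_zero])
      simp [vinner, hxi]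
    · have hlin : vinner xi w = vinner xi x0i - γ * vinner xi xi := by
        unfold vinner
        rw [Finset.mul_sum, ← Finset.sum_sub_distrib]
        refine Finset.sum_congr rfl fun j _ => ?_
        simp only [hw]
        ring
      have hc : (vnormSq xi : ℂ) ≠ 0 := by exact_mod_cast hz
      rw [hlin, vinner_self, hγ]
      field_simp
      ring
  have hmat : rankOne hi xi - rankOne h0i x0i = rankOne p xi + rankOne q w := by
    funext k j
    show hi k * conj (xi j) - h0i k * conj (x0i j)
        = p k * conj (xi j) + q k * conj (w j)
    simp only [hp, hq, hw, map_sub, map_mul]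
    ring
  rw [hmat, finner_add_right, finner_rankOne, finner_rankOne]
  have bnd1 : ‖conj (vinner p (M.mulVec xi))‖ ≤ vnorm p * (opNorm M * vnorm xi) := by
    rw [RCLike.norm_conj]
    calc ‖vinner p (M.mulVec xi)‖ ≤ vnorm p * vnorm (M.mulVec xi) := abs_vinner_le _ _
      _ ≤ vnorm p * (opNorm M * vnorm xi) :=
          mul_le_mul_of_nonneg_left (mulVec_le_opNorm M xi) (vnorm_nonneg p)
  have bnd2 : ‖conj (vinner q (M.mulVec w))‖ ≤ vnorm q * (opNorm M * vnorm w) := by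
    rw [RCLike.norm_conj]
    calc ‖vinner q (M.mulVec w)‖ ≤ vnorm q * vnorm (M.mulVec w) := abs_vinner_le _ _
      _ ≤ vnorm q * (opNorm M * vnorm w) :=
          mul_le_mul_of_nonneg_left (mulVec_le_opNorm M w) (vnorm_nonneg q)
  have htri := norm_add_le (conj (vinner p (M.mulVec xi))) (conj (vinner q (M.mulVec w)))
  set A := vnorm p * vnorm xi with hA
  set B := vnorm q * vnorm w with hB
  have hAnn : 0 ≤ A := mul_nonneg (vnorm_nonneg p) (vnorm_nonneg xi)
  have hBnn : 0 ≤ B := mul_nonneg (vnorm_nonneg q) (vnorm_nonneg w)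
  have hfrob : frobSq (rankOne hi xi - rankOne h0i x0i) = A ^ 2 + B ^ 2 := by
    rw [hmat, frobSq_add_orth p q xi w horth, hA, hB, mul_pow, mul_pow,
      vnorm_sq_eq, vnorm_sq_eq, vnorm_sq_eq, vnorm_sq_eq]
  have hAB : A + B ≤ Real.sqrt 2 * frob (rankOne hi xi - rankOne h0i x0i) := by
    have h1 : (A + B) ^ 2 ≤ 2 * (A ^ 2 + B ^ 2) := by nlinarith [sq_nonneg (A - B)]
    have h2 : A + B = Real.sqrt ((A + B) ^ 2) :=
      (Real.sqrt_sq (by linarith)).symm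
    rw [h2]
    calc Real.sqrt ((A + B) ^ 2) ≤ Real.sqrt (2 * (A ^ 2 + B ^ 2)) := Real.sqrt_le_sqrt h1
      _ = Real.sqrt 2 * Real.sqrt (A ^ 2 + B ^ 2) := Real.sqrt_mul (by norm_num) _
      _ = Real.sqrt 2 * frob (rankOne hi xi - rankOne h0i x0i) := by
          rw [frob, hfrob]
  calc ‖conj (vinner p (M.mulVec xi)) + conj (vinner q (M.mulVec w))‖
      ≤ ‖conj (vinner p (M.mulVec xi))‖ + ‖conj (vinner q (M.mulVec w))‖ := htri
    _ ≤ vnorm p * (opNorm M * vnorm xi) + vnorm q * (opNorm M * vnorm w) := by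
        exact add_le_add bnd1 bnd2
    _ = opNorm M * (A + B) := by rw [hA, hB]; ring
    _ ≤ opNorm M * (Real.sqrt 2 * frob (rankOne hi xi - rankOne h0i x0i)) :=
        mul_le_mul_of_nonneg_left hAB (opNorm_nonneg M)
    _ = Real.sqrt 2 * opNorm M * frob (rankOne hi xi - rankOne h0i x0i) := by ring
    _ = Real.sqrt 2 * opNorm M * frob (rankOne p xi + rankOne q w) := by rw [hmat]


lemma vinner_calAi {K N L : ℕ} (b : Fin L → Fin K → ℂ) (a : Fin L → Fin N → ℂ)
    (e : Fin L → ℂ) (Z : Matrix (Fin K) (Fin N) ℂ) :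
    vinner e (calAi b a Z) = finner (calAdj b a e) Z := by
  simp only [vinner, calAi, finner, calAdj, Matrix.of_apply, Matrix.mulVec, dotProduct,
    map_sum, map_mul, Complex.conj_conj, Finset.mul_sum, Finset.sum_mul]
  rw [Finset.sum_comm]
  refine Finset.sum_congr rfl fun k _ => ?_
  rw [Finset.sum_comm]
  refine Finset.sum_congr rfl fun j _ => Finset.sum_congr rfl fun l _ => by ring

lemma vinner_sum_right {L : ℕ} {ι : Type*} (t : Finset ι) (e : Fin L → ℂ) (f : ι → Fin L → ℂ) :
    vinner e (fun l => ∑ i ∈ t, f i l) = ∑ i ∈ t, vinner e (f i) := by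
  unfold vinner
  rw [Finset.sum_comm]
  exact Finset.sum_congr rfl fun l _ => Finset.mul_sum _ _ _

lemma calAi_sub {K N L : ℕ} (b : Fin L → Fin K → ℂ) (a : Fin L → Fin N → ℂ)
    (Y Z : Matrix (Fin K) (Fin N) ℂ) (l : Fin L) :
    calAi b a (Y - Z) l = calAi b a Y l - calAi b a Z l := by
  unfold calAi vinner
  rw [← Finset.sum_sub_distrib]
  refine Finset.sum_congr rfl fun k _ => ?_
  rw [Matrix.sub_mulVec]
  simp only [Pi.sub_apply]
  ring

lemma vnormSq_sub_expand {L : ℕ} (f g : Fin L → ℂ) :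
    vnormSq (fun l => f l - g l) = vnormSq f - 2 * (vinner f g).re + vnormSq g := by
  have h1 : toE (fun l => f l - g l) = toE f - toE g := rfl
  rw [vnormSq_eq, h1, @norm_sub_sq ℂ _ _ _ _ (toE f) (toE g), ← vnormSq_eq, ← vnormSq_eq,
    ← vinner_eq, RCLike.re_to_complex]

lemma vinner_norm_comm {L : ℕ} (u v : Fin L → ℂ) : ‖vinner u v‖ = ‖vinner v u‖ := by
  rw [vinner_eq, vinner_eq, ← inner_conj_symm, RCLike.norm_conj]

lemma G0_nonneg (z : ℝ) : 0 ≤ G0 z := sq_nonneg _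

lemma G0_ge (z : ℝ) (hz : 20/11 ≤ z) : (9/11)^2 ≤ G0 z := by
  unfold G0
  have h1 : (9:ℝ)/11 ≤ max (z-1) 0 := le_max_of_le_left (by linarith)
  calc ((9:ℝ)/11)^2 ≤ (max (z-1) 0)^2 := by
        apply pow_le_pow_left₀ (by norm_num) h1
    _ = _ := rfl

lemma Gi_nonneg {K N L : ℕ} (b : Fin L → Fin K → ℂ) {ρ : ℝ} (μ di : ℝ)
    (hi : Fin K → ℂ) (xi : Fin N → ℂ) (hρ : 0 ≤ ρ) : 0 ≤ Gi b ρ μ di hi xi := by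
  unfold Gi
  have := G0_nonneg (vnormSq hi / (2 * di))
  have := G0_nonneg (vnormSq xi / (2 * di))
  have hsum : 0 ≤ ∑ l, G0 ((L : ℝ) * ‖vinner (b l) hi‖ ^ 2 / (8 * di * μ ^ 2)) :=
    Finset.sum_nonneg fun l _ => G0_nonneg _
  have : 0 ≤ G0 (vnormSq hi / (2 * di)) + G0 (vnormSq xi / (2 * di))
      + ∑ l, G0 ((L : ℝ) * ‖vinner (b l) hi‖ ^ 2 / (8 * di * μ ^ 2)) := by linarith
  exact mul_nonneg hρ this

lemma Gi_ge_h {K N L : ℕ} (b : Fin L → Fin K → ℂ) {ρ : ℝ} (μ di : ℝ)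
    (hi : Fin K → ℂ) (xi : Fin N → ℂ) (hρ : 0 ≤ ρ) :
    ρ * G0 (vnormSq hi / (2 * di)) ≤ Gi b ρ μ di hi xi := by
  unfold Gi
  have h2 := G0_nonneg (vnormSq xi / (2 * di))
  have hsum : 0 ≤ ∑ l, G0 ((L : ℝ) * ‖vinner (b l) hi‖ ^ 2 / (8 * di * μ ^ 2)) :=
    Finset.sum_nonneg fun l _ => G0_nonneg _
  apply mul_le_mul_of_nonneg_left _ hρ
  linarith

lemma Gi_ge_x {K N L : ℕ} (b : Fin L → Fin K → ℂ) {ρ : ℝ} (μ di : ℝ)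
    (hi : Fin K → ℂ) (xi : Fin N → ℂ) (hρ : 0 ≤ ρ) :
    ρ * G0 (vnormSq xi / (2 * di)) ≤ Gi b ρ μ di hi xi := by
  unfold Gi
  have h1 := G0_nonneg (vnormSq hi / (2 * di))
  have hsum : 0 ≤ ∑ l, G0 ((L : ℝ) * ‖vinner (b l) hi‖ ^ 2 / (8 * di * μ ^ 2)) :=
    Finset.sum_nonneg fun l _ => G0_nonneg _
  apply mul_le_mul_of_nonneg_left _ hρ
  linarith

lemma Gi_ge_bl {K N L : ℕ} (b : Fin L → Fin K → ℂ) {ρ : ℝ} (μ di : ℝ)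
    (hi : Fin K → ℂ) (xi : Fin N → ℂ) (hρ : 0 ≤ ρ) (l : Fin L) :
    ρ * G0 ((L : ℝ) * ‖vinner (b l) hi‖ ^ 2 / (8 * di * μ ^ 2)) ≤ Gi b ρ μ di hi xi := by
  unfold Gi
  have h1 := G0_nonneg (vnormSq hi / (2 * di))
  have h2 := G0_nonneg (vnormSq xi / (2 * di))
  have hsum : G0 ((L : ℝ) * ‖vinner (b l) hi‖ ^ 2 / (8 * di * μ ^ 2))
      ≤ ∑ l, G0 ((L : ℝ) * ‖vinner (b l) hi‖ ^ 2 / (8 * di * μ ^ 2)) :=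
    Finset.single_le_sum (f := fun l' => G0 ((L : ℝ) * ‖vinner (b l') hi‖ ^ 2 / (8 * di * μ ^ 2)))
      (fun l' _ => G0_nonneg _) (Finset.mem_univ l)
  apply mul_le_mul_of_nonneg_left _ hρ
  linarith

lemma quad_bound (u v : ℝ) (hu : 0 ≤ u) (hv : 0 < v)
    (h : 2 * u ^ 2 ≤ v ^ 2 + (3/5) * v * u) : u ≤ (9/10) * v := by
  nlinarith [sq_nonneg (u - (9/10) * v)]

lemma arith_contra (ρ d t E : ℝ) (ht : 0 < t) (hE : 0 ≤ E) (hd : 0.9 * t ≤ d)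
    (hρ : d ^ 2 + 2 * E ≤ ρ) (hle : ρ * (9/11 : ℝ) ^ 2 ≤ t ^ 2 / 675 + E) : False := by
  nlinarith [mul_pos ht ht, sq_nonneg (d - 0.9 * t)]

set_option maxHeartbeats 2000000 in
/-- `𝒩_F̃ ∩ 𝒩_ε ⊆ 𝒩_d ∩ 𝒩_μ ∩ 𝒩_{(9/10)ε}`. -/
theorem statement1
    {K N L s : ℕ} (hK : 0 < K) (hN : 0 < N) (hL : 0 < L) (hs : 0 < s)
    (b : Fin L → Fin K → ℂ) (hb : BtBeqI b)
    (a : Fin s → Fin L → Fin N → ℂ)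
    (h0 : Fin s → Fin K → ℂ) (x0 : Fin s → Fin N → ℂ)
    (d0 : Fin s → ℝ) (hd0 : ∀ i, 0 < d0 i)
    (hh0 : ∀ i, vnorm (h0 i) = Real.sqrt (d0 i))
    (hx0 : ∀ i, vnorm (x0 i) = Real.sqrt (d0 i))
    (e : Fin L → ℂ) (μ ρ d ε : ℝ) (dd : Fin s → ℝ)
    (hμ : 0 < μ) (hε : 0 < ε) (hε15 : ε ≤ 1 / 15)
    (hdd : ∀ i, 0.9 * d0 i ≤ dd i ∧ dd i ≤ 1.1 * d0 i)
    (hdlow : 0.9 * dtot d0 ≤ d) (hdhigh : d ≤ 1.1 * dtot d0)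
    (hρ : d ^ 2 + 2 * vnormSq e ≤ ρ)
    (hRIP : LocalRIP b a h0 x0 d0 μ ε)
    (hAe : AadjNorm b a e ≤ ε * dtot d0 / (10 * Real.sqrt 2 * (s : ℝ) * kappa d0)) :
    ∀ (h : Fin s → Fin K → ℂ) (x : Fin s → Fin N → ℂ),
      inNF b a h0 x0 e d0 ρ μ dd ε h x → inNeps h0 x0 d0 ε h x →
      inNd d0 h x ∧ inNmu b d0 μ h ∧ inNeps h0 x0 d0 (9 / 10 * ε) h x := by
  intro h x hNF hNeps
  set E := vnormSq e with hEdef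
  have hEnn : 0 ≤ E := vnormSq_nonneg e
  set κ := kappa d0 with hκdef
  set t := dtot d0 with htdef
  -- kappa facts
  haveI hNe : Nonempty (Fin s) := ⟨⟨0, hs⟩⟩
  obtain ⟨imin, himin⟩ := exists_eq_ciInf_of_finite (f := d0)
  obtain ⟨imax, himax⟩ := exists_eq_ciSup_of_finite (f := d0)
  have hmin_pos : 0 < ⨅ i, d0 i := himin ▸ hd0 imin
  have hsup_pos : 0 < ⨆ i, d0 i := himax ▸ hd0 imax
  have hle_sup : ∀ i, d0 i ≤ ⨆ j, d0 j := fun i =>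
    le_ciSup (Set.Finite.bddAbove (Set.finite_range d0)) i
  have hinf_le : ∀ i, (⨅ j, d0 j) ≤ d0 i := fun i =>
    ciInf_le (Set.Finite.bddBelow (Set.finite_range d0)) i
  have hκ1 : 1 ≤ κ := by
    rw [hκdef, kappa, le_div_iff₀ hmin_pos, one_mul]
    exact le_trans (hinf_le imax) (himax ▸ le_refl _)
  have hκpos : 0 < κ := lt_of_lt_of_le one_pos hκ1
  have hκd0 : ∀ i, (⨆ j, d0 j) ≤ κ * d0 i := by
    intro i
    rw [hκdef, kappa, div_mul_eq_mul_div, le_div_iff₀ hmin_pos]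
    exact mul_le_mul_of_nonneg_left (hinf_le i) (le_of_lt hsup_pos)
  -- dtot facts
  have hsumsq_pos : 0 < ∑ i, d0 i ^ 2 :=
    Finset.sum_pos (fun i _ => pow_pos (hd0 i) 2) Finset.univ_nonempty
  have ht_pos : 0 < t := Real.sqrt_pos.mpr hsumsq_pos
  have ht_sq : t ^ 2 = ∑ i, d0 i ^ 2 := Real.sq_sqrt (le_of_lt hsumsq_pos)
  have hs1 : (1 : ℝ) ≤ (s : ℝ) := by exact_mod_cast hs
  set sqs := Real.sqrt (s : ℝ) with hsqs
  have hsqs_pos : 0 < sqs := Real.sqrt_pos.mpr (by linarith)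
  have hsqs_sq : sqs ^ 2 = (s : ℝ) := Real.sq_sqrt (by linarith)
  have ht_le : ∀ i, t ≤ sqs * (κ * d0 i) := by
    intro i
    have h1 : ∑ j, d0 j ^ 2 ≤ (s : ℝ) * (⨆ j, d0 j) ^ 2 := by
      calc ∑ j, d0 j ^ 2 ≤ ∑ _j : Fin s, (⨆ j, d0 j) ^ 2 :=
            Finset.sum_le_sum fun j _ =>
              pow_le_pow_left₀ (le_of_lt (hd0 j)) (hle_sup j) 2
        _ = (s : ℝ) * (⨆ j, d0 j) ^ 2 := by
            rw [Finset.sum_const, Finset.card_univ, Fintype.card_fin, nsmul_eq_mul]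
    calc t = Real.sqrt (∑ j, d0 j ^ 2) := rfl
      _ ≤ Real.sqrt ((s : ℝ) * (⨆ j, d0 j) ^ 2) := Real.sqrt_le_sqrt h1
      _ = sqs * (⨆ j, d0 j) := by
          rw [Real.sqrt_mul (by linarith), Real.sqrt_sq (le_of_lt hsup_pos)]
      _ ≤ sqs * (κ * d0 i) := mul_le_mul_of_nonneg_left (hκd0 i) (le_of_lt hsqs_pos)
  -- basic positivity
  have hρnn : 0 ≤ ρ := le_trans (by positivity) hρ
  have hrhs : ε ^ 2 * t ^ 2 / (3 * (s : ℝ) * κ ^ 2) ≤ t ^ 2 / 675 := by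
    rw [div_le_div_iff₀ (by positivity) (by norm_num)]
    have h1 : ε ^ 2 ≤ 1 / 225 := by nlinarith
    have h2 : (3 : ℝ) ≤ 3 * (s : ℝ) * κ ^ 2 := by nlinarith
    nlinarith [sq_nonneg t, mul_pos ht_pos ht_pos]
  have hFG : Fobj b a h0 x0 e h x + Greg b ρ μ dd h x
      ≤ ε ^ 2 * t ^ 2 / (3 * (s : ℝ) * κ ^ 2) + E := hNF
  have hFobj_nn : 0 ≤ Fobj b a h0 x0 e h x := vnormSq_nonneg _
  have hGreg_nn : 0 ≤ Greg b ρ μ dd h x :=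
    Finset.sum_nonneg fun i _ => Gi_nonneg b μ (dd i) (h i) (x i) hρnn
  have hGreg_le : Greg b ρ μ dd h x ≤ t ^ 2 / 675 + E := by linarith
  have hGi_le : ∀ i, Gi b ρ μ (dd i) (h i) (x i) ≤ t ^ 2 / 675 + E := by
    intro i
    refine le_trans ?_ hGreg_le
    exact Finset.single_le_sum (fun j _ => Gi_nonneg b μ (dd j) (h j) (x j) hρnn)
      (Finset.mem_univ i)
  have hddpos : ∀ i, 0 < dd i := fun i => lt_of_lt_of_le (by nlinarith [hd0 i]) (hdd i).1
  -- 𝒩_d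
  have hNd : inNd d0 h x := by
    intro i
    have hdd2 := (hdd i).2
    constructor
    · by_contra hcon
      push_neg at hcon
      have hsq : 4 * d0 i < vnormSq (h i) := by
        have h1 : (2 * Real.sqrt (d0 i)) ^ 2 < vnorm (h i) ^ 2 :=
          pow_lt_pow_left₀ hcon (by positivity) two_ne_zero
        rw [vnorm_sq_eq, mul_pow, Real.sq_sqrt (le_of_lt (hd0 i))] at h1
        linarith
      have hz : 20 / 11 ≤ vnormSq (h i) / (2 * dd i) := by
        rw [le_div_iff₀ (by linarith [hddpos i])]
        nlinarith [hd0 i]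
      have hbig : ρ * (9/11 : ℝ) ^ 2 ≤ t ^ 2 / 675 + E := by
        calc ρ * (9/11 : ℝ) ^ 2 ≤ ρ * G0 (vnormSq (h i) / (2 * dd i)) :=
              mul_le_mul_of_nonneg_left (G0_ge _ hz) hρnn
          _ ≤ Gi b ρ μ (dd i) (h i) (x i) := Gi_ge_h b μ (dd i) (h i) (x i) hρnn
          _ ≤ _ := hGi_le i
      exact arith_contra ρ d t E ht_pos hEnn hdlow hρ hbig
    · by_contra hcon
      push_neg at hcon
      have hsq : 4 * d0 i < vnormSq (x i) := by
        have h1 : (2 * Real.sqrt (d0 i)) ^ 2 < vnorm (x i) ^ 2 :=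
          pow_lt_pow_left₀ hcon (by positivity) two_ne_zero
        rw [vnorm_sq_eq, mul_pow, Real.sq_sqrt (le_of_lt (hd0 i))] at h1
        linarith
      have hz : 20 / 11 ≤ vnormSq (x i) / (2 * dd i) := by
        rw [le_div_iff₀ (by linarith [hddpos i])]
        nlinarith [hd0 i]
      have hbig : ρ * (9/11 : ℝ) ^ 2 ≤ t ^ 2 / 675 + E := by
        calc ρ * (9/11 : ℝ) ^ 2 ≤ ρ * G0 (vnormSq (x i) / (2 * dd i)) :=
              mul_le_mul_of_nonneg_left (G0_ge _ hz) hρnn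
          _ ≤ Gi b ρ μ (dd i) (h i) (x i) := Gi_ge_x b μ (dd i) (h i) (x i) hρnn
          _ ≤ _ := hGi_le i
      exact arith_contra ρ d t E ht_pos hEnn hdlow hρ hbig
  -- 𝒩_μ
  have hNmu : inNmu b d0 μ h := by
    intro i l
    have hdd2 := (hdd i).2
    by_contra hcon
    push_neg at hcon
    have hsq : 16 * d0 i * μ ^ 2 < (L : ℝ) * ‖vinner (b l) (h i)‖ ^ 2 := by
      have h1 : (4 * Real.sqrt (d0 i) * μ) ^ 2 < (Real.sqrt L * ‖vinner (b l) (h i)‖) ^ 2 :=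
        pow_lt_pow_left₀ hcon (by positivity) two_ne_zero
      rw [mul_pow, mul_pow, mul_pow, Real.sq_sqrt (le_of_lt (hd0 i)),
        Real.sq_sqrt (Nat.cast_nonneg L)] at h1
      linarith
    have hz : 20 / 11 ≤ (L : ℝ) * ‖vinner (b l) (h i)‖ ^ 2 / (8 * dd i * μ ^ 2) := by
      rw [le_div_iff₀ (by nlinarith [hddpos i, mul_pos hμ hμ])]
      nlinarith [hd0 i, sq_nonneg μ, mul_pos hμ hμ]
    have hbig : ρ * (9/11 : ℝ) ^ 2 ≤ t ^ 2 / 675 + E := by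
      calc ρ * (9/11 : ℝ) ^ 2
          ≤ ρ * G0 ((L : ℝ) * ‖vinner (b l) (h i)‖ ^ 2 / (8 * dd i * μ ^ 2)) :=
            mul_le_mul_of_nonneg_left (G0_ge _ hz) hρnn
        _ ≤ Gi b ρ μ (dd i) (h i) (x i) := Gi_ge_bl b μ (dd i) (h i) (x i) hρnn l
        _ ≤ _ := hGi_le i
    exact arith_contra ρ d t E ht_pos hEnn hdlow hρ hbig
  refine ⟨hNd, hNmu, ?_⟩
  -- Part 2: contraction of δ
  set Δ : Fin s → Matrix (Fin K) (Fin N) ℂ := fun i => Hmap h x i - Hmap h0 x0 i with hΔdef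
  have hfamnn : 0 ≤ famFrobSq Δ := Finset.sum_nonneg fun i _ => frobSq_nonneg _
  set D := famFrob Δ with hDdef
  have hD_nn : 0 ≤ D := Real.sqrt_nonneg _
  have hD_sq : D ^ 2 = famFrobSq Δ := Real.sq_sqrt hfamnn
  obtain ⟨hRIPlow, -⟩ := hRIP h x hNd hNmu hNeps
  -- rewrite the residual
  have hres : (fun l => calA b a (Hmap h x) l - yvec b a h0 x0 e l)
      = fun l => calA b a Δ l - e l := by
    funext l
    unfold yvec
    have : calA b a Δ l = calA b a (Hmap h x) l - calA b a (Hmap h0 x0) l := by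
      unfold calA
      rw [← Finset.sum_sub_distrib]
      exact Finset.sum_congr rfl fun i _ => calAi_sub b (a i) _ _ l
    rw [this]; ring
  have hFobj : Fobj b a h0 x0 e h x
      = vnormSq (calA b a Δ) - 2 * (vinner (calA b a Δ) e).re + E := by
    unfold Fobj
    rw [hres, vnormSq_sub_expand]
  have hre_le : (vinner (calA b a Δ) e).re ≤ ‖vinner e (calA b a Δ)‖ := by
    calc (vinner (calA b a Δ) e).re ≤ ‖vinner (calA b a Δ) e‖ := Complex.re_le_norm _
      _ = ‖vinner e (calA b a Δ)‖ := vinner_norm_comm _ _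
  set Ae := AadjNorm b a e with hAedef
  have hAe_i : ∀ i, opNorm (calAdj b (a i) e) ≤ Ae := by
    intro i
    rw [hAedef, AadjNorm]
    exact le_ciSup (Set.Finite.bddAbove
      (Set.finite_range fun j => opNorm (calAdj b (a j) e))) i
  have hAe_nn : 0 ≤ Ae := le_trans (opNorm_nonneg _) (hAe_i ⟨0, hs⟩)
  have hnoise : ‖vinner e (calA b a Δ)‖ ≤ Real.sqrt 2 * Ae * ∑ i, frob (Δ i) := by
    have h1 : vinner e (calA b a Δ) = ∑ i, finner (calAdj b (a i) e) (Δ i) := by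
      have h2 : calA b a Δ = fun l => ∑ i, calAi b (a i) (Δ i) l := rfl
      rw [h2, vinner_sum_right]
      exact Finset.sum_congr rfl fun i _ => vinner_calAi b (a i) e (Δ i)
    rw [h1]
    calc ‖∑ i, finner (calAdj b (a i) e) (Δ i)‖
        ≤ ∑ i, ‖finner (calAdj b (a i) e) (Δ i)‖ := norm_sum_le _ _
      _ ≤ ∑ i, Real.sqrt 2 * Ae * frob (Δ i) := by
          refine Finset.sum_le_sum fun i _ => ?_
          calc ‖finner (calAdj b (a i) e) (Δ i)‖
              ≤ Real.sqrt 2 * opNorm (calAdj b (a i) e) * frob (Δ i) :=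
                finner_diff_bound (calAdj b (a i) e) (h i) (h0 i) (x i) (x0 i)
            _ ≤ Real.sqrt 2 * Ae * frob (Δ i) := by
                apply mul_le_mul_of_nonneg_right _ (frob_nonneg _)
                exact mul_le_mul_of_nonneg_left (hAe_i i) (Real.sqrt_nonneg 2)
      _ = Real.sqrt 2 * Ae * ∑ i, frob (Δ i) := by rw [Finset.mul_sum]
  have hsumfrob : ∑ i, frob (Δ i) ≤ sqs * D := by
    have h1 : (∑ i, frob (Δ i)) ^ 2 ≤ (s : ℝ) * famFrobSq Δ := by
      have h2 := sq_sum_le_card_mul_sum_sq (s := Finset.univ) (f := fun i => frob (Δ i))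
      have h3 : ∑ i, frob (Δ i) ^ 2 = famFrobSq Δ :=
        Finset.sum_congr rfl fun i _ => frob_sq_eq (Δ i)
      rw [h3] at h2
      simpa using h2
    have hsum_nn : 0 ≤ ∑ i, frob (Δ i) := Finset.sum_nonneg fun i _ => frob_nonneg _
    calc ∑ i, frob (Δ i) = Real.sqrt ((∑ i, frob (Δ i)) ^ 2) := (Real.sqrt_sq hsum_nn).symm
      _ ≤ Real.sqrt ((s : ℝ) * famFrobSq Δ) := Real.sqrt_le_sqrt h1
      _ = sqs * D := by rw [Real.sqrt_mul (by linarith), hDdef, famFrob]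
  -- main chain
  have hFobj_le : Fobj b a h0 x0 e h x ≤ ε ^ 2 * t ^ 2 / (3 * (s : ℝ) * κ ^ 2) + E := by
    linarith
  have hmain : (2/3) * D ^ 2 ≤ ε ^ 2 * t ^ 2 / (3 * (s : ℝ) * κ ^ 2)
      + 2 * (Real.sqrt 2 * Ae * (sqs * D)) := by
    have c1 : (2/3) * D ^ 2 ≤ vnormSq (calA b a Δ) := by rw [hD_sq]; exact hRIPlow
    have c2 : vnormSq (calA b a Δ)
        ≤ Fobj b a h0 x0 e h x - E + 2 * ‖vinner e (calA b a Δ)‖ := by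
      linarith [hFobj, hre_le]
    have c3 : ‖vinner e (calA b a Δ)‖ ≤ Real.sqrt 2 * Ae * (sqs * D) := by
      refine le_trans hnoise ?_
      exact mul_le_mul_of_nonneg_left hsumfrob (by positivity)
    linarith
  -- clean up the noise term using hAe
  set v := ε * t with hvdef
  have hv_pos : 0 < v := mul_pos hε ht_pos
  set u := D * (sqs * κ) with hudef
  have hsq2_pos : (0:ℝ) < Real.sqrt 2 := by positivity
  have hAeq : Ae ≤ v / (10 * Real.sqrt 2 * (s : ℝ) * κ) := by
    simpa [hAedef, hκdef, htdef, hvdef] using hAe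
  have hAe2 : 2 * (Real.sqrt 2 * Ae * (sqs * D))
      ≤ 2 * (Real.sqrt 2 * (v / (10 * Real.sqrt 2 * (s : ℝ) * κ)) * (sqs * D)) := by
    have hfac : (0:ℝ) ≤ sqs * D := by positivity
    have step1 : Real.sqrt 2 * Ae ≤ Real.sqrt 2 * (v / (10 * Real.sqrt 2 * (s : ℝ) * κ)) :=
      mul_le_mul_of_nonneg_left hAeq (Real.sqrt_nonneg 2)
    have step2 : Real.sqrt 2 * Ae * (sqs * D)
        ≤ Real.sqrt 2 * (v / (10 * Real.sqrt 2 * (s : ℝ) * κ)) * (sqs * D) :=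
      mul_le_mul_of_nonneg_right step1 hfac
    linarith
  have h1 : (2/3) * D ^ 2 ≤ v ^ 2 / (3 * (s : ℝ) * κ ^ 2)
      + 2 * (Real.sqrt 2 * (v / (10 * Real.sqrt 2 * (s : ℝ) * κ)) * (sqs * D)) := by
    have hveq : v ^ 2 = ε ^ 2 * t ^ 2 := by rw [hvdef]; ring
    rw [hveq]
    linarith
  have hs_eq : (s : ℝ) = sqs ^ 2 := hsqs_sq.symm
  have h2 := mul_le_mul_of_nonneg_left h1 (by positivity : (0:ℝ) ≤ 3 * (s : ℝ) * κ ^ 2)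
  have e1 : 3 * (s : ℝ) * κ ^ 2 * ((2/3) * D ^ 2) = 2 * u ^ 2 := by
    rw [hs_eq, hudef]; ring
  have e2 : 3 * (s : ℝ) * κ ^ 2 * (v ^ 2 / (3 * (s : ℝ) * κ ^ 2)
      + 2 * (Real.sqrt 2 * (v / (10 * Real.sqrt 2 * (s : ℝ) * κ)) * (sqs * D)))
      = v ^ 2 + (3/5) * v * u := by
    rw [hs_eq, hudef]
    field_simp
    ring
  rw [e1, e2] at h2
  have hu_nn : 0 ≤ u := by
    rw [hudef]
    exact mul_nonneg hD_nn (le_of_lt (mul_pos hsqs_pos hκpos))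
  have hfin : u ≤ (9/10) * v := quad_bound u v hu_nn hv_pos h2
  -- conclude per index
  intro i
  have hfrob_le : frob (Δ i) ≤ D := by
    have h3 : frobSq (Δ i) ≤ famFrobSq Δ :=
      Finset.single_le_sum (f := fun j => frobSq (Δ j)) (fun j _ => frobSq_nonneg _)
        (Finset.mem_univ i)
    exact Real.sqrt_le_sqrt h3
  have hDle : D ≤ (9/10) * ε * d0 i := by
    have h4 : D * (sqs * κ) ≤ (9/10) * (ε * t) := hfin
    have h5 : t ≤ sqs * (κ * d0 i) := ht_le i
    have h6 : D * (sqs * κ) ≤ (9/10) * ε * (sqs * (κ * d0 i)) := by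
      calc D * (sqs * κ) ≤ (9/10) * (ε * t) := h4
        _ ≤ (9/10) * (ε * (sqs * (κ * d0 i))) := by
            apply mul_le_mul_of_nonneg_left _ (by norm_num)
            exact mul_le_mul_of_nonneg_left h5 (le_of_lt hε)
        _ = (9/10) * ε * (sqs * (κ * d0 i)) := by ring
    have hpos : 0 < sqs * κ := mul_pos hsqs_pos hκpos
    have h7 : D * (sqs * κ) ≤ ((9/10) * ε * d0 i) * (sqs * κ) := by
      calc D * (sqs * κ) ≤ (9/10) * ε * (sqs * (κ * d0 i)) := h6
        _ = ((9/10) * ε * d0 i) * (sqs * κ) := by ring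
    exact le_of_mul_le_mul_right h7 hpos
  show deltaI (h0 i) (x0 i) (d0 i) (h i) (x i) ≤ 9 / 10 * ε
  unfold deltaI
  rw [div_le_iff₀ (hd0 i)]
  calc frob (rankOne (h i) (x i) - rankOne (h0 i) (x0 i)) = frob (Δ i) := rfl
    _ ≤ D := hfrob_le
    _ ≤ (9/10) * ε * d0 i := hDle
    _ = 9 / 10 * ε * d0 i := by ring



end RGD
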